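/- For every integer t ≥ 0, the expected squared Frobenius norm of (I−J)H(t) equals the trace of the t-fold iterate of Φ* applied to I−J: E[ ‖(I−J)H(t)‖_F² ] = Tr( (Φ*)^t(I−J) ). -/

import Mathlib

open Matrix BigOperators

/-- The random update matrix `K(g) = (1−q)I + q ∑ᵢ eᵢ e_{g(i)}ᵀ`. -/
noncomputable def Kmat (N : ℕ) (q : ℝ) (g : Fin N → Fin N) :
    Matrix (Fin N) (Fin N) ℝ :=
  (1 - q) • (1 : Matrix (Fin N) (Fin N) ℝ)
    + q • Matrix.of fun i j => if g i = j then (1 : ℝ) else 0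

/-- The map `Φ*(Y) = P_qᵀ Y P_q + q²(Ψ⁻(Pᵀ·Ψ(Y)) − Pᵀ Ψ⁻(Ψ(Y)) P)`,
where `P_q = (1−q)I + qP`. -/
noncomputable def PhiStar {N : ℕ} (P : Matrix (Fin N) (Fin N) ℝ) (q : ℝ)
    (Y : Matrix (Fin N) (Fin N) ℝ) : Matrix (Fin N) (Fin N) ℝ :=
  ((1 - q) • (1 : Matrix (Fin N) (Fin N) ℝ) + q • P)ᵀ * Y *
      ((1 - q) • (1 : Matrix (Fin N) (Fin N) ℝ) + q • P)
    + q ^ 2 •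
        (Matrix.diagonal (Pᵀ *ᵥ Matrix.diag Y)
          - Pᵀ * Matrix.diagonal (Matrix.diag Y) * P)

/-- `E[‖(I−J)H(t)‖_F²] = Tr((Φ*)ᵗ(I−J))`, where
`H(t) = K(1)⋯K(t)` is a product of `t` i.i.d. copies of `K`; the expectation
is written out as the sum over all `t`-tuples of maps `g : [N] → [N]`, each
weighted by its probability `∏ₛ ∏ᵢ p_{i, gₛ(i)}`. -/
lemma marg {N : ℕ} (P : Matrix (Fin N) (Fin N) ℝ) (hProw : ∀ i, ∑ j, P i j = 1)
    (k l : Fin N) (f h : Fin N → ℝ) :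
    ∑ g : Fin N → Fin N, (∏ i, P i (g i)) * (f (g k) * h (g l))
      = if k = l then ∑ j, P k j * (f j * h j)
        else (∑ j, P k j * f j) * (∑ j, P l j * h j) := by
  have key : ∀ g : Fin N → Fin N,
      (∏ i, P i (g i)) * (f (g k) * h (g l))
        = ∏ i, (P i (g i) * ((if i = k then f (g i) else 1) * (if i = l then h (g i) else 1))) := by
    intro g
    rw [Finset.prod_mul_distrib, Finset.prod_mul_distrib,
      Finset.prod_ite_eq' Finset.univ k (fun i => f (g i)),
      Finset.prod_ite_eq' Finset.univ l (fun i => h (g i))]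
    simp
  simp only [key]
  rw [show (∑ g : Fin N → Fin N, ∏ i, (P i (g i) * ((if i = k then f (g i) else 1) * (if i = l then h (g i) else 1)))) = ∏ i, ∑ j, (P i j * ((if i = k then f j else 1) * (if i = l then h j else 1))) from by
    rw [Finset.prod_univ_sum, Fintype.piFinset_univ]]
  by_cases hkl : k = l
  · subst hkl
    rw [if_pos rfl]
    have : ∀ i, (∑ j, P i j * ((if i = k then f j else 1) * (if i = k then h j else 1)))
        = if i = k then (∑ j, P k j * (f j * h j)) else 1 := by
      intro i
      by_cases hik : i = k
      · subst hik; simp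
      · simp [hik, hProw i]
    simp only [this, Finset.prod_ite_eq' Finset.univ k, Finset.mem_univ, if_pos]
  · rw [if_neg hkl]
    have : ∀ i, (∑ j, P i j * ((if i = k then f j else 1) * (if i = l then h j else 1)))
        = (if i = k then (∑ j, P k j * f j) else 1) * (if i = l then (∑ j, P l j * h j) else 1) := by
      intro i
      by_cases hik : i = k
      · subst hik; simp [hkl, hProw]
      · by_cases hil : i = l
        · subst hil; simp [hik, hProw]
        · simp [hik, hil, hProw i]
    simp only [this]
    rw [Finset.prod_mul_distrib, Finset.prod_ite_eq' Finset.univ k,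
      Finset.prod_ite_eq' Finset.univ l]
    simp

lemma step {N : ℕ} (P : Matrix (Fin N) (Fin N) ℝ) (hProw : ∀ i, ∑ j, P i j = 1)
    (q : ℝ) (Y : Matrix (Fin N) (Fin N) ℝ) :
    ∑ g : Fin N → Fin N, (∏ i, P i (g i)) • ((Kmat N q g)ᵀ * Y * Kmat N q g)
      = PhiStar P q Y := by
  have hKentry : ∀ (g : Fin N → Fin N) (k c : Fin N),
      Kmat N q g k c = (1 - q) * (if k = c then 1 else 0) + q * (if g k = c then 1 else 0) := by
    intro g k c
    simp [Kmat, Matrix.one_apply]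
  set Pq : Fin N → Fin N → ℝ := fun k c => (1 - q) * (if k = c then 1 else 0) + q * P k c
    with hPqdef
  have hrow1 : ∀ (k c : Fin N),
      (∑ j, P k j * ((1 - q) * (if k = c then (1:ℝ) else 0) + q * (if j = c then 1 else 0)))
        = Pq k c := by
    intro k c
    have : ∀ j, P k j * ((1 - q) * (if k = c then (1:ℝ) else 0) + q * (if j = c then 1 else 0))
        = ((1 - q) * (if k = c then (1:ℝ) else 0)) * P k j + q * (if j = c then P k j else 0) := by
      intro j; split_ifs <;> ring
    rw [Finset.sum_congr rfl fun j _ => this j, Finset.sum_add_distrib, ← Finset.mul_sum,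
      ← Finset.mul_sum, hProw k, Finset.sum_ite_eq' Finset.univ c]
    simp [hPqdef]
  have hdiag : ∀ (k a b : Fin N),
      (∑ j, P k j * (((1 - q) * (if k = a then (1:ℝ) else 0) + q * (if j = a then 1 else 0))
          * ((1 - q) * (if k = b then (1:ℝ) else 0) + q * (if j = b then 1 else 0))))
        = Pq k a * Pq k b + q ^ 2 * ((if a = b then P k a else 0) - P k a * P k b) := by
    intro k a b
    have expand : ∀ j, P k j * (((1 - q) * (if k = a then (1:ℝ) else 0) + q * (if j = a then 1 else 0))
          * ((1 - q) * (if k = b then (1:ℝ) else 0) + q * (if j = b then 1 else 0)))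
        = ((1 - q) * (if k = a then (1:ℝ) else 0) * ((1 - q) * (if k = b then (1:ℝ) else 0))) * P k j
          + ((1 - q) * (if k = a then (1:ℝ) else 0) * q) * (if j = b then P k j else 0)
          + (q * ((1 - q) * (if k = b then (1:ℝ) else 0))) * (if j = a then P k j else 0)
          + (q * q) * (if j = a then (if j = b then P k j else 0) else 0) := by
      intro j; split_ifs <;> ring
    rw [Finset.sum_congr rfl fun j _ => expand j]
    rw [Finset.sum_add_distrib, Finset.sum_add_distrib, Finset.sum_add_distrib,
      ← Finset.mul_sum, ← Finset.mul_sum, ← Finset.mul_sum, ← Finset.mul_sum, hProw k,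
      Finset.sum_ite_eq' Finset.univ b (fun j => P k j)]
    have h2 : (∑ j, if j = a then (if j = b then P k j else 0) else 0)
        = if a = b then P k a else 0 := by
      rw [Finset.sum_ite_eq' Finset.univ a]
      simp
    have h3 : (∑ j, if j = a then P k j else 0) = P k a := by
      rw [Finset.sum_ite_eq' Finset.univ a]; simp
    rw [h2, h3]
    simp only [hPqdef, Finset.mem_univ, if_pos]
    split_ifs <;> ring
  have E2 : ∀ (k l a b : Fin N),
      ∑ g : Fin N → Fin N, (∏ i, P i (g i)) * (Kmat N q g k a * Kmat N q g l b)
        = Pq k a * Pq l b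
          + (if k = l then q ^ 2 * ((if a = b then P k a else 0) - P k a * P k b) else 0) := by
    intro k l a b
    simp only [hKentry]
    rw [marg P hProw k l
      (fun j => (1 - q) * (if k = a then (1:ℝ) else 0) + q * (if j = a then 1 else 0))
      (fun j => (1 - q) * (if l = b then (1:ℝ) else 0) + q * (if j = b then 1 else 0))]
    by_cases hkl : k = l
    · subst hkl
      rw [if_pos rfl, if_pos rfl, hdiag k a b]
    · rw [if_neg hkl, if_neg hkl, hrow1 k a, hrow1 l b, add_zero]
  -- now entrywise
  ext a b
  rw [Matrix.sum_apply]
  have hprod : ∀ g : Fin N → Fin N,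
      ((∏ i, P i (g i)) • ((Kmat N q g)ᵀ * Y * Kmat N q g)) a b
        = ∑ l, ∑ k, (∏ i, P i (g i)) * (Y k l * (Kmat N q g k a * Kmat N q g l b)) := by
    intro g
    rw [Matrix.smul_apply, smul_eq_mul, Matrix.mul_apply, Finset.mul_sum]
    refine Finset.sum_congr rfl fun l _ => ?_
    rw [Matrix.mul_apply, Finset.sum_mul, Finset.mul_sum]
    refine Finset.sum_congr rfl fun k _ => ?_
    rw [Matrix.transpose_apply]; ring
  rw [Finset.sum_congr rfl fun g _ => hprod g, Finset.sum_comm]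
  have hswap : ∀ l, (∑ g : Fin N → Fin N, ∑ k, (∏ i, P i (g i)) * (Y k l * (Kmat N q g k a * Kmat N q g l b)))
      = ∑ k, Y k l * ∑ g : Fin N → Fin N, (∏ i, P i (g i)) * (Kmat N q g k a * Kmat N q g l b) := by
    intro l
    rw [Finset.sum_comm]
    refine Finset.sum_congr rfl fun k _ => ?_
    rw [Finset.mul_sum]
    exact Finset.sum_congr rfl fun g _ => by ring
  rw [Finset.sum_congr rfl fun l _ => hswap l]
  simp only [E2]
  -- split into main term and correction
  have split : ∀ l, (∑ k, Y k l * (Pq k a * Pq l b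
        + (if k = l then q ^ 2 * ((if a = b then P k a else 0) - P k a * P k b) else 0)))
      = (∑ k, Pq k a * Y k l) * Pq l b
        + Y l l * (q ^ 2 * ((if a = b then P l a else 0) - P l a * P l b)) := by
    intro l
    rw [Finset.sum_congr rfl fun k (_ : k ∈ Finset.univ) =>
      (by split_ifs <;> ring :
        Y k l * (Pq k a * Pq l b
          + (if k = l then q ^ 2 * ((if a = b then P k a else 0) - P k a * P k b) else 0))
        = Pq k a * Y k l * Pq l b
          + (if k = l then Y k l * (q ^ 2 * ((if a = b then P k a else 0) - P k a * P k b)) else 0))]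
    rw [Finset.sum_add_distrib, ← Finset.sum_mul,
      Finset.sum_ite_eq' Finset.univ l
        (fun k => Y k l * (q ^ 2 * ((if a = b then P k a else 0) - P k a * P k b)))]
    simp
  rw [Finset.sum_congr rfl fun l _ => split l, Finset.sum_add_distrib]
  -- compute RHS entry
  have hcorr : (∑ l, Y l l * (q ^ 2 * ((if a = b then P l a else 0) - P l a * P l b)))
      = q ^ 2 * ((if a = b then ∑ k, P k a * Y k k else 0) - ∑ k, P k a * Y k k * P k b) := by
    have hsplit : (if a = b then ∑ k, P k a * Y k k else 0)
        = ∑ k, if a = b then P k a * Y k k else 0 := by split_ifs <;> simp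
    rw [hsplit]
    rw [show ((∑ k, if a = b then P k a * Y k k else 0) - ∑ k, P k a * Y k k * P k b)
        = ∑ k, ((if a = b then P k a * Y k k else 0) - P k a * Y k k * P k b) from
      (Finset.sum_sub_distrib _ _).symm]
    rw [Finset.mul_sum]
    exact Finset.sum_congr rfl fun k _ => by split_ifs <;> ring
  rw [hcorr]
  have hMain : (((1 - q) • (1 : Matrix (Fin N) (Fin N) ℝ) + q • P)ᵀ * Y *
        ((1 - q) • (1 : Matrix (Fin N) (Fin N) ℝ) + q • P)) a b
      = ∑ l, (∑ k, Pq k a * Y k l) * Pq l b := by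
    rw [Matrix.mul_apply]
    refine Finset.sum_congr rfl fun l _ => ?_
    have h1 : (((1 - q) • (1 : Matrix (Fin N) (Fin N) ℝ) + q • P)ᵀ * Y) a l
        = ∑ k, Pq k a * Y k l := by
      rw [Matrix.mul_apply]
      refine Finset.sum_congr rfl fun k _ => ?_
      rw [Matrix.transpose_apply, Matrix.add_apply, Matrix.smul_apply, Matrix.smul_apply,
        Matrix.one_apply]
      simp only [hPqdef, smul_eq_mul]
    have h2 : ((1 - q) • (1 : Matrix (Fin N) (Fin N) ℝ) + q • P) l b = Pq l b := by
      rw [Matrix.add_apply, Matrix.smul_apply, Matrix.smul_apply, Matrix.one_apply]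
      simp only [hPqdef, smul_eq_mul]
    rw [h1, h2]
  have hCorr2 : (q ^ 2 • (Matrix.diagonal (Pᵀ *ᵥ Matrix.diag Y)
          - Pᵀ * Matrix.diagonal (Matrix.diag Y) * P)) a b
      = q ^ 2 * ((if a = b then ∑ k, P k a * Y k k else 0) - ∑ k, P k a * Y k k * P k b) := by
    rw [Matrix.smul_apply, Matrix.sub_apply, smul_eq_mul]
    have hd : (Matrix.diagonal (Pᵀ *ᵥ Matrix.diag Y)) a b
        = if a = b then ∑ k, P k a * Y k k else 0 := by
      rw [Matrix.diagonal_apply]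
      split_ifs with hab
      · subst hab
        rw [Matrix.mulVec, dotProduct]
        exact Finset.sum_congr rfl fun k _ => by rw [Matrix.transpose_apply, Matrix.diag]
      · rfl
    have hm : (Pᵀ * Matrix.diagonal (Matrix.diag Y) * P) a b
        = ∑ k, P k a * Y k k * P k b := by
      rw [Matrix.mul_apply]
      refine Finset.sum_congr rfl fun k _ => ?_
      rw [Matrix.mul_apply]
      have : ∀ m, (Pᵀ) a m * (Matrix.diagonal (Matrix.diag Y)) m k
          = if m = k then P k a * Y k k else 0 := by
        intro m
        rw [Matrix.transpose_apply, Matrix.diagonal_apply]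
        by_cases hmk : m = k
        · subst hmk; simp [Matrix.diag, mul_comm]
        · simp [hmk]
      rw [Finset.sum_congr rfl fun m _ => this m, Finset.sum_ite_eq' Finset.univ k]
      simp
    rw [hd, hm]
  rw [show PhiStar P q Y a b = _ + _ from Matrix.add_apply .., hMain, hCorr2]

lemma ind {N : ℕ} (P : Matrix (Fin N) (Fin N) ℝ) (hProw : ∀ i, ∑ j, P i j = 1)
    (q : ℝ) : ∀ (t : ℕ) (Y : Matrix (Fin N) (Fin N) ℝ),
    ∑ g : Fin t → (Fin N → Fin N),
        (∏ s, ∏ i, P i (g s i)) *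
          (((List.ofFn fun s => Kmat N q (g s)).prodᵀ * Y *
            (List.ofFn fun s => Kmat N q (g s)).prod).trace)
      = ((PhiStar P q)^[t] Y).trace := by
  intro t
  induction t with
  | zero =>
    intro Y
    simp [List.ofFn_zero]
  | succ t IH =>
    intro Y
    rw [← Equiv.sum_comp (Fin.consEquiv (fun _ : Fin (t+1) => Fin N → Fin N))]
    rw [Fintype.sum_prod_type]
    have hterm : ∀ (g₀ : Fin N → Fin N) (gr : Fin t → (Fin N → Fin N)),
        (∏ s : Fin (t+1), ∏ i, P i ((Fin.consEquiv (fun _ => Fin N → Fin N)) (g₀, gr) s i)) *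
          (((List.ofFn fun s => Kmat N q ((Fin.consEquiv (fun _ => Fin N → Fin N)) (g₀, gr) s)).prodᵀ * Y *
            (List.ofFn fun s => Kmat N q ((Fin.consEquiv (fun _ => Fin N → Fin N)) (g₀, gr) s)).prod).trace)
        = (∏ s : Fin t, ∏ i, P i (gr s i)) *
            ((∏ i, P i (g₀ i)) *
            (((List.ofFn fun s => Kmat N q (gr s)).prodᵀ *
              ((Kmat N q g₀)ᵀ * Y * Kmat N q g₀) *
              (List.ofFn fun s => Kmat N q (gr s)).prod).trace)) := by
      intro g₀ gr
      have hc : (Fin.consEquiv (fun _ : Fin (t+1) => Fin N → Fin N)) (g₀, gr)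
          = Fin.cons g₀ gr := rfl
      rw [hc]
      rw [Fin.prod_univ_succ]
      simp only [Fin.cons_zero, Fin.cons_succ]
      rw [List.ofFn_succ]
      simp only [Fin.cons_zero, Fin.cons_succ, List.prod_cons]
      rw [Matrix.transpose_mul]
      rw [show ((List.ofFn fun s => Kmat N q (gr s)).prodᵀ * (Kmat N q g₀)ᵀ) *
            Y * (Kmat N q g₀ * (List.ofFn fun s => Kmat N q (gr s)).prod)
          = (List.ofFn fun s => Kmat N q (gr s)).prodᵀ *
              ((Kmat N q g₀)ᵀ * Y * Kmat N q g₀) *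
              (List.ofFn fun s => Kmat N q (gr s)).prod from by
        simp only [Matrix.mul_assoc]]
      ring
    rw [Finset.sum_congr rfl fun g₀ _ =>
      Finset.sum_congr rfl fun gr _ => hterm g₀ gr]
    rw [Finset.sum_comm]
    have hlin : ∀ (gr : Fin t → (Fin N → Fin N)),
        (∑ g₀ : Fin N → Fin N, (∏ s : Fin t, ∏ i, P i (gr s i)) *
            ((∏ i, P i (g₀ i)) *
            (((List.ofFn fun s => Kmat N q (gr s)).prodᵀ *
              ((Kmat N q g₀)ᵀ * Y * Kmat N q g₀) *
              (List.ofFn fun s => Kmat N q (gr s)).prod).trace)))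
        = (∏ s : Fin t, ∏ i, P i (gr s i)) *
            (((List.ofFn fun s => Kmat N q (gr s)).prodᵀ * (PhiStar P q Y) *
              (List.ofFn fun s => Kmat N q (gr s)).prod).trace) := by
      intro gr
      rw [← Finset.mul_sum]
      congr 1
      rw [← step P hProw q Y]
      rw [Matrix.mul_sum, Matrix.sum_mul, Matrix.trace_sum]
      refine Finset.sum_congr rfl fun g₀ _ => ?_
      rw [Matrix.mul_smul, Matrix.smul_mul, Matrix.trace_smul, smul_eq_mul]
    rw [Finset.sum_congr rfl fun gr _ => hlin gr]
    rw [IH (PhiStar P q Y), Function.iterate_succ_apply]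

theorem stmt15 (N : ℕ) (hN : 1 ≤ N) (P : Matrix (Fin N) (Fin N) ℝ)
    (hPnonneg : ∀ i j, 0 ≤ P i j) (hProw : ∀ i, ∑ j, P i j = 1)
    (q : ℝ) (hq0 : 0 ≤ q) (hq1 : q ≤ 1) (t : ℕ) :
    ∑ g : Fin t → (Fin N → Fin N),
        (∏ s, ∏ i, P i (g s i)) *
          (∑ i, ∑ j,
            ((((1 : Matrix (Fin N) (Fin N) ℝ) - Matrix.of fun _ _ => (N : ℝ)⁻¹) *
                (List.ofFn fun s => Kmat N q (g s)).prod
              : Matrix (Fin N) (Fin N) ℝ) i j ^ 2))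
      = ((PhiStar P q)^[t]
          ((1 : Matrix (Fin N) (Fin N) ℝ) - Matrix.of fun _ _ => (N : ℝ)⁻¹)).trace := by
  have hNne : (N : ℝ) ≠ 0 := Nat.cast_ne_zero.mpr (by omega)
  set B : Matrix (Fin N) (Fin N) ℝ :=
    (1 : Matrix (Fin N) (Fin N) ℝ) - Matrix.of fun _ _ => (N : ℝ)⁻¹ with hB
  have frob : ∀ M : Matrix (Fin N) (Fin N) ℝ,
      (∑ i, ∑ j, M i j ^ 2) = (Mᵀ * M).trace := by
    intro M
    have h : (Mᵀ * M).trace = ∑ j, ∑ i, M i j ^ 2 := by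
      rw [Matrix.trace]
      refine Finset.sum_congr rfl fun j _ => ?_
      rw [Matrix.diag, Matrix.mul_apply]
      refine Finset.sum_congr rfl fun i _ => ?_
      rw [Matrix.transpose_apply, sq]
    rw [h, Finset.sum_comm]
  have hBt : Bᵀ = B := by
    ext i j
    simp [hB, Matrix.transpose_apply, Matrix.sub_apply, Matrix.one_apply, eq_comm]
  have hJJ : (Matrix.of fun _ _ => (N : ℝ)⁻¹ : Matrix (Fin N) (Fin N) ℝ) *
      (Matrix.of fun _ _ => (N : ℝ)⁻¹) = Matrix.of fun _ _ => (N : ℝ)⁻¹ := by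
    ext i j
    rw [Matrix.mul_apply]
    simp only [Matrix.of_apply]
    rw [Finset.sum_const, Finset.card_univ, Fintype.card_fin, nsmul_eq_mul]
    field_simp
  have hBB : B * B = B := by
    rw [hB, sub_mul, mul_sub, mul_sub, hJJ]
    simp only [one_mul, mul_one]
    abel
  have hmat : ∀ H : Matrix (Fin N) (Fin N) ℝ,
      (B * H)ᵀ * (B * H) = Hᵀ * B * H := by
    intro H
    rw [Matrix.transpose_mul, hBt, Matrix.mul_assoc Hᵀ B (B * H),
      ← Matrix.mul_assoc B B H, hBB, ← Matrix.mul_assoc Hᵀ B H]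
  have key : ∀ g : Fin t → (Fin N → Fin N),
      (∑ i, ∑ j, ((B * (List.ofFn fun s => Kmat N q (g s)).prod) i j) ^ 2)
        = ((List.ofFn fun s => Kmat N q (g s)).prodᵀ * B *
            (List.ofFn fun s => Kmat N q (g s)).prod).trace := by
    intro g
    rw [frob, hmat]
  rw [Finset.sum_congr rfl fun g (_ : g ∈ Finset.univ) => by rw [key g]]
  exact ind P hProw q t B
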